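/- Suppose Assumption (C) holds with parameter φ > 1, and let δ > 0, α ∈ [0,1). Set B := (1+λ)·φ·(b+D*)²/D* and Ω := 2b² + λ·B²·(D*)²/(2(b+D*)²). Then there exists R > 0 such that, with Q(z) := (1/2)z² + (Ω/(2D*δ))·∫_z^0 |g(s)−1|^{1−α}/(p(s)·g(s)) ds for z ≤ 0 and Q(z) := R·∫_0^z (e^s/g(s)²)(e^s−1) ds for z > 0, the function V(x1,x2,x3) := e^{x1} − x1 − 1 + (B/(b+D*))(e^{x2} − x2 − 1) + Q(x3) is positive definite and radially unbounded on ℝ³ and satisfies ∇V(x)·F(x) < 0 for all x ∈ ℝ³ \ {0}, where F is the closed-loop vector field F(x) = ((b+D*)g(x3)(e^{x2}−1) + b(g(x3)−1) + D*g(x3)(1−e^{x1}), (b+D*)(λ(1−g(x3)) + λ(e^{−x2}−1) + g(x3)(1−e^{x2})), p(x3)(D(x) − D*·g(x3)·e^{x1})). -/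

import Mathlib

set_option maxHeartbeats 1000000

/-- Key algebraic bracket lemma for the region `x₃ > 0`. -/
lemma stmt18_bracket {A C β c u ψ : ℝ} (hA : 0 < A) (hC : 0 ≤ C)
    (hu : -1 < u) (hcon : β*ψ + C*ψ^2 < A) (hc : 10*A*C + 4*β^2 + A ≤ A*c) :
    -A*u^2 - β*u*ψ + (C - c*(1+u))*ψ^2 ≤ 0 := by
  have hc0 : 0 < c := by nlinarith [sq_nonneg β]
  have hcC : 9*A*C + 4*β^2 + A ≤ A*(c - C) := by nlinarith
  rcases le_or_gt (-(4/5) : ℝ) u with hu5 | hu5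
  · -- w = 1+u ≥ 1/5
    have hw : (1/5 : ℝ) ≤ 1 + u := by linarith
    have h1 : (1/5) * (10*A*C + 4*β^2 + A) ≤ A*c*(1+u) := by
      have : A*c*(1/5) ≤ A*c*(1+u) :=
        mul_le_mul_of_nonneg_left hw (by positivity)
      nlinarith
    nlinarith [sq_nonneg (2*A*u + β*ψ), sq_nonneg ψ, mul_nonneg (sq_nonneg ψ) hA.le,
      mul_nonneg (sq_nonneg ψ) hC]
  · -- u < -4/5 ; write r = -u ∈ (4/5, 1)
    set r : ℝ := -u with hr
    have hr1 : r < 1 := by simp [hr]; linarith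
    have hr45 : (4/5 : ℝ) < r := by simp [hr]; linarith
    have hid : -A*u^2 - β*u*ψ + (C - c*(1+u))*ψ^2
        = r*((β*ψ + C*ψ^2) - A) + (1-r)*(A*r + (C-c)*ψ^2) := by
      simp only [hr]; ring
    rw [hid]
    rcases le_or_gt A ((c-C)*ψ^2) with hbig | hsmall
    · have h2 : (1-r)*(A*r + (C-c)*ψ^2) ≤ 0 := by
        apply mul_nonpos_of_nonneg_of_nonpos (by linarith)
        nlinarith
      nlinarith
    · -- small ψ
      have hcCpos : 0 < c - C := by nlinarith [sq_nonneg β]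
      have hβψ : β*ψ ≤ A/2 := by
        have h1 : 4*β^2*ψ^2 ≤ (A*(c-C))*ψ^2 := by
          nlinarith [sq_nonneg ψ, mul_nonneg hA.le hC, sq_nonneg β]
        have h2 : A*((c-C)*ψ^2) ≤ A*A := by
          exact mul_le_mul_of_nonneg_left hsmall.le hA.le
        nlinarith [sq_nonneg ψ]
      have hCψ : C*ψ^2 ≤ A/4 := by
        nlinarith [mul_nonneg hC (sq_nonneg ψ)]
      have hG : β*ψ + C*ψ^2 ≤ 3*A/4 := by linarith
      have h3 : (1-r)*(A*r + (C-c)*ψ^2) ≤ (1-r)*A := by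
        apply mul_le_mul_of_nonneg_left _ (by linarith)
        nlinarith [mul_nonneg hcCpos.le (sq_nonneg ψ)]
      nlinarith

/-- Under Assumption (C) with parameter φ, with
B := (1+λ)φ(b+D*)²/D* and Ω := 2b² + λB²(D*)²/(2(b+D*)²), there exists R > 0 such
that the function V built from Q is positive definite and radially unbounded on ℝ³
and satisfies ∇V(x)·F(x) < 0 for all x ≠ 0, where F is the closed-loop vector
field of the transformed age-structured chemostat. -/
theorem stmt_18
    (S_in Sstar p0 q0 γ b Dstar : ℝ) (μ : ℝ → ℝ)
    (hSin : 0 < S_in) (hSstar : Sstar ∈ Set.Ioo 0 S_in)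
    (hp0 : 0 < p0) (hq0 : 0 < q0) (hγ : 0 ≤ γ) (hb : 0 ≤ b) (hDstar : 0 < Dstar)
    (hμ_bdd : BddAbove (Set.range μ))
    (hμ_C1 : ContDiffOn ℝ 1 μ (Set.Ici 0))
    (hμ_nonneg : ∀ S, 0 ≤ S → 0 ≤ μ S)
    (hμ_zero : μ 0 = 0) (hμ_pos : ∀ S, 0 < S → 0 < μ S)
    (hμeq : μ Sstar = (b + Dstar)^2 / (p0 * (b + Dstar) + γ * q0))
    (Xstar Ystar : ℝ)
    (hX : Xstar = Dstar * (S_in - Sstar) * (p0 * (b + Dstar) + γ * q0) / (b + Dstar)^2)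
    (hY : Ystar = Dstar * (S_in - Sstar) * (p0 * (b + Dstar) + γ * q0)^2 /
          (q0 * (b + Dstar)^3))
    (lam : ℝ) (hlam : lam = 1 - p0 * μ Sstar / (b + Dstar))
    (hlam' : lam = γ * Xstar / (Ystar * (b + Dstar)))
    (hlam01 : lam ∈ Set.Ico (0 : ℝ) 1)
    (κ : ℝ) (hκ : κ = (S_in - Sstar) / Sstar)
    (p g : ℝ → ℝ)
    (hp : ∀ z, p z = κ * Real.exp (-z) + 1)
    (hg : ∀ z, g z = μ (S_in / p z) / μ Sstar)
    -- Assumption (C) with parameter φ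
    (φ : ℝ) (hφ : 1 < φ)
    (hC : ∀ S ∈ Set.Icc Sstar S_in,
      (b - lam * (b + Dstar) / 2) * (μ Sstar / μ S - 1) +
        (1 + lam) * (lam^2 * φ * (b + Dstar)^2 / (4 * Dstar)) *
          (μ Sstar / μ S - 1)^2 <
      Dstar * (1 - 1 / (4 * (1 + lam) * φ)))
    (δ α : ℝ) (hδ : 0 < δ) (hα : α ∈ Set.Ico (0 : ℝ) 1)
    (B Ω : ℝ)
    (hB : B = (1 + lam) * φ * (b + Dstar)^2 / Dstar)
    (hΩ : Ω = 2 * b^2 + lam * B^2 * Dstar^2 / (2 * (b + Dstar)^2))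
    -- feedback law
    (D : ℝ × ℝ × ℝ → ℝ)
    (hD : ∀ x : ℝ × ℝ × ℝ, D x =
      (κ + 1) * Dstar * g x.2.2 * Real.exp (x.1 - x.2.2) / p x.2.2 +
        (if x.2.2 ≤ 0 then δ * |g x.2.2 - 1| ^ (1 + α) else 0))
    -- closed-loop vector field
    (F : ℝ × ℝ × ℝ → ℝ × ℝ × ℝ)
    (hF : ∀ x : ℝ × ℝ × ℝ, F x =
      ((b + Dstar) * g x.2.2 * (Real.exp x.2.1 - 1) + b * (g x.2.2 - 1) +
         Dstar * g x.2.2 * (1 - Real.exp x.1),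
       (b + Dstar) * (lam * (1 - g x.2.2) + lam * (Real.exp (-x.2.1) - 1) +
         g x.2.2 * (1 - Real.exp x.2.1)),
       p x.2.2 * (D x - Dstar * g x.2.2 * Real.exp x.1))) :
    ∃ R > (0 : ℝ), ∀ Q : ℝ → ℝ,
      (∀ z, Q z = if z ≤ 0 then
          (1/2) * z^2 + (Ω / (2 * Dstar * δ)) *
            ∫ s in z..(0:ℝ), |g s - 1| ^ (1 - α) / (p s * g s)
        else
          R * ∫ s in (0:ℝ)..z, (Real.exp s / (g s)^2) * (Real.exp s - 1)) →
      ∀ V : ℝ × ℝ × ℝ → ℝ,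
        (∀ x : ℝ × ℝ × ℝ, V x = Real.exp x.1 - x.1 - 1 +
          (B / (b + Dstar)) * (Real.exp x.2.1 - x.2.1 - 1) + Q x.2.2) →
        (V 0 = 0 ∧ (∀ x : ℝ × ℝ × ℝ, x ≠ 0 → 0 < V x) ∧
          Filter.Tendsto V (Filter.cocompact (ℝ × ℝ × ℝ)) Filter.atTop ∧
          ∀ x : ℝ × ℝ × ℝ, x ≠ 0 → fderiv ℝ V x (F x) < 0) := by
  obtain ⟨hS0, hSlt⟩ := hSstar
  obtain ⟨hlam0, hlam1⟩ := hlam01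
  obtain ⟨hα0, hα1⟩ := hα
  have hs : 0 < b + Dstar := by linarith
  have hκpos : 0 < κ := by rw [hκ]; exact div_pos (by linarith) hS0
  have hμstar : 0 < μ Sstar := hμ_pos _ hS0
  have hppos : ∀ z, 0 < p z := fun z => by
    rw [hp]; positivity
  have hpgt1 : ∀ z, 1 < p z := fun z => by
    rw [hp]; linarith only [mul_pos hκpos (Real.exp_pos (-z))]
  have hSf_pos : ∀ z, 0 < S_in / p z := fun z => div_pos hSin (hppos z)
  have hgpos : ∀ z, 0 < g z := fun z => by
    rw [hg]; exact div_pos (hμ_pos _ (hSf_pos z)) hμstar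
  obtain ⟨M, hM⟩ := hμ_bdd
  have hMμ : ∀ t, μ t ≤ M := fun t => hM (Set.mem_range_self t)
  obtain ⟨hmax, hhmaxdef⟩ : ∃ x : ℝ, x = max (M / μ Sstar) 1 := ⟨_, rfl⟩
  have hmax1 : (1:ℝ) ≤ hmax := by rw [hhmaxdef]; exact le_max_right _ _
  have hmaxpos : (0:ℝ) < hmax := lt_of_lt_of_le one_pos hmax1
  have hgle : ∀ z, g z ≤ hmax := fun z => by
    rw [hg, hhmaxdef]
    exact le_trans ((div_le_div_iff_of_pos_right hμstar).2 (hMμ _)) (le_max_left _ _)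
  -- continuity
  have hμcont : ContinuousOn μ (Set.Ici 0) := hμ_C1.continuousOn
  have hpcont : Continuous p := by
    have : p = fun z => κ * Real.exp (-z) + 1 := funext hp
    rw [this]; continuity
  have hScont : Continuous (fun z => S_in / p z) :=
    continuous_const.div hpcont (fun z => (hppos z).ne')
  have hgcont : Continuous g := by
    have hgf : g = fun z => μ (S_in / p z) / μ Sstar := funext hg
    rw [hgf]
    apply Continuous.div_const
    rw [← continuousOn_univ]
    exact hμcont.comp hScont.continuousOn (fun z _ => le_of_lt (hSf_pos z))
  have hk1 : κ + 1 = S_in / Sstar := by rw [hκ]; field_simp; ring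
  have hSstar_eq : S_in / (κ + 1) = Sstar := by
    rw [hk1]; field_simp
  have hp0' : p 0 = κ + 1 := by rw [hp]; simp
  have hg0 : g 0 = 1 := by
    rw [hg, hp0', hSstar_eq]; exact div_self hμstar.ne'
  -- minimum of μ on [Sstar, S_in]
  have hIccsub : Set.Icc Sstar S_in ⊆ Set.Ici 0 := fun t ht => le_trans hS0.le ht.1
  obtain ⟨Smin, hSminmem, hSminmin⟩ :=
    isCompact_Icc.exists_isMinOn (Set.nonempty_Icc.2 hSlt.le) (hμcont.mono hIccsub)
  obtain ⟨m, hmdef⟩ : ∃ x : ℝ, x = μ Smin := ⟨_, rfl⟩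
  have hmpos : 0 < m := by rw [hmdef]; exact hμ_pos _ (lt_of_lt_of_le hS0 hSminmem.1)
  have hmle : ∀ t ∈ Set.Icc Sstar S_in, m ≤ μ t := fun t ht => hmdef ▸ hSminmin ht
  -- Lipschitz bound for μ on [Sstar, S_in]
  have hCD : ContDiffOn ℝ 1 μ (Set.Icc Sstar S_in) := hμ_C1.mono hIccsub
  have hud : UniqueDiffOn ℝ (Set.Icc Sstar S_in) := uniqueDiffOn_Icc hSlt
  have hdc : ContinuousOn (fun t => |derivWithin μ (Set.Icc Sstar S_in) t|)
      (Set.Icc Sstar S_in) := (hCD.continuousOn_derivWithin hud le_rfl).abs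
  obtain ⟨SL, hSLmem, hSLmax⟩ :=
    isCompact_Icc.exists_isMaxOn (Set.nonempty_Icc.2 hSlt.le) hdc
  obtain ⟨L, hLdef⟩ : ∃ x : ℝ, x = |derivWithin μ (Set.Icc Sstar S_in) SL| := ⟨_, rfl⟩
  have hL0 : 0 ≤ L := by rw [hLdef]; exact abs_nonneg _
  have hlip : LipschitzOnWith (Real.toNNReal L) μ (Set.Icc Sstar S_in) := by
    apply (convex_Icc _ _).lipschitzOnWith_of_nnnorm_hasDerivWithin_le
      (f' := derivWithin μ (Set.Icc Sstar S_in))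
      (fun t ht => ((hCD.differentiableOn one_ne_zero) t ht).hasDerivWithinAt)
    intro t ht
    rw [← NNReal.coe_le_coe, coe_nnnorm, Real.coe_toNNReal _ hL0, Real.norm_eq_abs, hLdef]
    exact hSLmax ht
  have hlipR : ∀ t ∈ Set.Icc Sstar S_in, |μ Sstar - μ t| ≤ L * (t - Sstar) := by
    intro t ht
    have h1 := hlip.dist_le_mul Sstar (Set.left_mem_Icc.2 hSlt.le) t ht
    rw [Real.dist_eq, Real.dist_eq, Real.coe_toNNReal _ hL0] at h1
    rw [abs_sub_comm]
    calc |μ t - μ Sstar| ≤ L * |Sstar - t| := by rwa [abs_sub_comm (μ Sstar)] at h1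
      _ = L * (t - Sstar) := by rw [abs_sub_comm, abs_of_nonneg (by linarith [ht.1])]
  -- derived constants
  obtain ⟨Φ, hΦdef⟩ : ∃ x : ℝ, x = (1 + lam) * φ := ⟨_, rfl⟩
  have hΦ1 : 1 < Φ := by
    rw [hΦdef]
    have h' : (1+lam)*1 < (1+lam)*φ := mul_lt_mul_of_pos_left hφ (by linarith only [hlam0])
    linarith only [h', hlam0]
  have hΦpos : 0 < Φ := by linarith
  have hBpos : 0 < B := by rw [hB]; positivity
  have hdBeq : Dstar * B = Φ * (b + Dstar)^2 := by
    rw [hB, hΦdef]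
    field_simp [hDstar.ne']
  have hdBge : (b + Dstar)^2 ≤ Dstar * B := by
    rw [hdBeq]
    nlinarith only [sq_nonneg (b + Dstar), hΦ1]
  obtain ⟨A, hAdef⟩ : ∃ x : ℝ, x = Dstar * (1 - 1/(4*Φ)) := ⟨_, rfl⟩
  have hApos : 0 < A := by
    rw [hAdef]
    apply mul_pos hDstar
    have h1 : 1/(4*Φ) < 1 := by
      rw [div_lt_one (by linarith only [hΦpos])]
      linarith only [hΦ1]
    linarith only [h1]
  obtain ⟨Cc, hCcdef⟩ : ∃ x : ℝ, x = lam^2 * B / 4 := ⟨_, rfl⟩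
  have hCc0 : 0 ≤ Cc := by rw [hCcdef]; positivity
  have hCcB : Cc = lam^2*B/4 := hCcdef
  obtain ⟨β, hβdef⟩ : ∃ x : ℝ, x = b - lam*(b+Dstar)/2 := ⟨_, rfl⟩
  obtain ⟨K, hKdef⟩ : ∃ x : ℝ, x = L * S_in * κ / m + 1 := ⟨_, rfl⟩
  have hK1 : (1:ℝ) ≤ K := by
    rw [hKdef]
    have h' : 0 ≤ L * S_in * κ / m := div_nonneg (by positivity) hmpos.le
    linarith only [h']
  have hKpos : 0 < K := by linarith only [hK1]
  obtain ⟨R, hRdef⟩ : ∃ x : ℝ, x = (2*K^2*hmax^2/Dstar) * (10*Cc + (4*β^2 + A)/A) := ⟨_, rfl⟩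
  have hRpos : 0 < R := by
    rw [hRdef]
    have hnum : 0 < 2*K^2*hmax^2 := by
      have h' := mul_pos (pow_pos hKpos 2) (pow_pos hmaxpos 2)
      linarith only [h']
    apply mul_pos (div_pos hnum hDstar)
    have h1 : 0 < (4*β^2 + A)/A :=
      div_pos (by linarith only [sq_nonneg β, hApos]) hApos
    linarith only [h1, hCc0]
  have h2lam : 2*lam ≤ Φ := by
    rw [hΦdef]
    have h' : 0 ≤ (1+lam)*(φ-1) :=
      mul_nonneg (by linarith only [hlam0]) (by linarith only [hφ])
    linarith only [h', hlam1]
  have hΩ0 : 0 ≤ Ω := by rw [hΩ]; positivity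
  have hΩcoef : b^2 + Dstar*B*lam^2 ≤ Ω := by
    have hX : (0:ℝ) < 2*(b+Dstar)^2 := by positivity
    have hΩ2 : Ω*(2*(b+Dstar)^2) = 4*b^2*(b+Dstar)^2 + lam*B^2*Dstar^2 := by
      rw [hΩ]; field_simp; ring
    have h0 : 0 ≤ lam*(Φ - 2*lam)*(Φ*((b+Dstar)^2)^2) :=
      mul_nonneg (mul_nonneg hlam0 (by linarith)) (by positivity)
    have e1 : Dstar*B*(lam^2*(b+Dstar)^2) = Φ*(b+Dstar)^2*(lam^2*(b+Dstar)^2) := by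
      rw [hdBeq]
    have hdBsq : B^2*Dstar^2 = (Φ*(b+Dstar)^2)^2 := by
      rw [← hdBeq]; ring
    have key : (b^2 + Dstar*B*lam^2)*(2*(b+Dstar)^2) ≤ Ω*(2*(b+Dstar)^2) := by
      rw [hΩ2]; nlinarith only [h0, e1, hdBsq, sq_nonneg (b+Dstar), hlam0]
    exact le_of_mul_le_mul_right key hX
  refine ⟨R, hRpos, ?_⟩
  intro Q hQ V hV
  -- integrand continuity
  have hf1cont : Continuous (fun s => |g s - 1| ^ (1 - α) / (p s * g s)) := by
    apply Continuous.div
    · exact ((hgcont.sub continuous_const).abs).rpow_const (fun s => Or.inr (by linarith only [hα1]))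
    · exact hpcont.mul hgcont
    · exact fun s => (mul_pos (hppos s) (hgpos s)).ne'
  have hf1nonneg : ∀ s, 0 ≤ |g s - 1| ^ (1 - α) / (p s * g s) := fun s =>
    div_nonneg (Real.rpow_nonneg (abs_nonneg _) _) (mul_pos (hppos s) (hgpos s)).le
  have hf10 : |g 0 - 1| ^ (1 - α) / (p 0 * g 0) = 0 := by
    rw [hg0]
    simp [Real.zero_rpow (by linarith only [hα1] : (1:ℝ) - α ≠ 0)]
  have hf2cont : Continuous (fun s => (Real.exp s / (g s)^2) * (Real.exp s - 1)) := by
    apply Continuous.mul _ (Real.continuous_exp.sub continuous_const)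
    exact Real.continuous_exp.div (hgcont.pow 2) (fun s => (pow_pos (hgpos s) 2).ne')
  have hf2nonneg : ∀ s, 0 ≤ s → 0 ≤ (Real.exp s / (g s)^2) * (Real.exp s - 1) := by
    intro s hs
    apply mul_nonneg (div_nonneg (Real.exp_pos s).le (pow_pos (hgpos s) 2).le)
    have := Real.one_le_exp (x := s) (by linarith only [hs])
    linarith only [this]
  have hQ0 : Q 0 = 0 := by rw [hQ]; simp
  have hc00 : 0 ≤ Ω / (2*Dstar*δ) := div_nonneg hΩ0 (by positivity)
  -- derivative of Q for z < 0
  have hQd_neg : ∀ z : ℝ, z < 0 →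
      HasDerivAt Q (z - (Ω/(2*Dstar*δ)) * (|g z - 1| ^ (1 - α) / (p z * g z))) z := by
    intro z hz
    have hI : HasDerivAt (fun t => ∫ s in t..(0:ℝ), |g s - 1| ^ (1 - α) / (p s * g s))
        (-(|g z - 1| ^ (1 - α) / (p z * g z))) z :=
      intervalIntegral.integral_hasDerivAt_left (hf1cont.intervalIntegrable _ _)
        (hf1cont.stronglyMeasurableAtFilter _ _) hf1cont.continuousAt
    have hphi : HasDerivAt (fun t => (1/2 : ℝ)*t^2 + (Ω/(2*Dstar*δ)) *
        ∫ s in t..(0:ℝ), |g s - 1| ^ (1 - α) / (p s * g s))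
        ((1/2 : ℝ)*(2*z^1) + (Ω/(2*Dstar*δ)) * -(|g z - 1| ^ (1 - α) / (p z * g z))) z :=
      ((hasDerivAt_pow 2 z).const_mul (1/2 : ℝ)).add (hI.const_mul _)
    have heq : Q =ᶠ[nhds z] (fun t => (1/2 : ℝ)*t^2 + (Ω/(2*Dstar*δ)) *
        ∫ s in t..(0:ℝ), |g s - 1| ^ (1 - α) / (p s * g s)) := by
      filter_upwards [Iio_mem_nhds hz] with t ht
      rw [hQ t, if_pos (le_of_lt ht)]
    have := hphi.congr_of_eventuallyEq heq
    exact this.congr_deriv (by ring)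
  -- derivative of Q for z > 0
  have hQd_pos : ∀ z : ℝ, 0 < z →
      HasDerivAt Q (R * ((Real.exp z / (g z)^2) * (Real.exp z - 1))) z := by
    intro z hz
    have hI : HasDerivAt (fun t => ∫ s in (0:ℝ)..t, (Real.exp s / (g s)^2) * (Real.exp s - 1))
        ((Real.exp z / (g z)^2) * (Real.exp z - 1)) z :=
      intervalIntegral.integral_hasDerivAt_right (hf2cont.intervalIntegrable _ _)
        (hf2cont.stronglyMeasurableAtFilter _ _) hf2cont.continuousAt
    have hphi := hI.const_mul R
    have heq : Q =ᶠ[nhds z] (fun t => R * ∫ s in (0:ℝ)..t,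
        (Real.exp s / (g s)^2) * (Real.exp s - 1)) := by
      filter_upwards [Ioi_mem_nhds hz] with t ht
      rw [hQ t, if_neg (not_le.2 ht)]
    exact hphi.congr_of_eventuallyEq heq
  -- derivative of Q at 0
  have hQd_zero : HasDerivAt Q 0 0 := by
    have hIl : HasDerivAt (fun t => ∫ s in t..(0:ℝ), |g s - 1| ^ (1 - α) / (p s * g s))
        (-(|g 0 - 1| ^ (1 - α) / (p 0 * g 0))) 0 :=
      intervalIntegral.integral_hasDerivAt_left (hf1cont.intervalIntegrable _ _)
        (hf1cont.stronglyMeasurableAtFilter _ _) hf1cont.continuousAt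
    have hphil : HasDerivAt (fun t => (1/2 : ℝ)*t^2 + (Ω/(2*Dstar*δ)) *
        ∫ s in t..(0:ℝ), |g s - 1| ^ (1 - α) / (p s * g s)) 0 0 := by
      have h' := ((hasDerivAt_pow 2 (0:ℝ)).const_mul (1/2 : ℝ)).add (hIl.const_mul (Ω/(2*Dstar*δ)))
      exact h'.congr_deriv (by rw [hf10]; norm_num)
    have hl : HasDerivWithinAt Q 0 (Set.Iic 0) 0 := by
      apply (hphil.hasDerivWithinAt).congr
      · intro t ht
        rw [hQ t, if_pos (Set.mem_Iic.1 ht)]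
      · rw [hQ 0, if_pos le_rfl]
    have hIr : HasDerivAt (fun t => ∫ s in (0:ℝ)..t, (Real.exp s / (g s)^2) * (Real.exp s - 1))
        ((Real.exp 0 / (g 0)^2) * (Real.exp 0 - 1)) 0 :=
      intervalIntegral.integral_hasDerivAt_right (hf2cont.intervalIntegrable _ _)
        (hf2cont.stronglyMeasurableAtFilter _ _) hf2cont.continuousAt
    have hphir : HasDerivAt (fun t => R * ∫ s in (0:ℝ)..t,
        (Real.exp s / (g s)^2) * (Real.exp s - 1)) 0 0 := by
      have h' := hIr.const_mul R
      exact h'.congr_deriv (by simp)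
    have hr : HasDerivWithinAt Q 0 (Set.Ici 0) 0 := by
      apply (hphir.hasDerivWithinAt).congr
      · intro t ht
        rcases eq_or_lt_of_le (Set.mem_Ici.1 ht) with h0 | h0
        · rw [hQ t, ← h0]
          simp
        · rw [hQ t, if_neg (not_le.2 h0)]
      · rw [hQ0]
        simp
    have hu := hl.union hr
    rw [Set.Iic_union_Ici] at hu
    simpa [hasDerivWithinAt_univ] using hu
  -- nonnegativity and positivity of Q
  have hQle : ∀ z : ℝ, z ≤ 0 → (1/2 : ℝ)*z^2 ≤ Q z := by
    intro z hz
    rw [hQ z, if_pos hz]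
    have h' : 0 ≤ ∫ s in z..(0:ℝ), |g s - 1| ^ (1 - α) / (p s * g s) :=
      intervalIntegral.integral_nonneg hz (fun u _ => hf1nonneg u)
    nlinarith only [h', hc00]
  have hQgeR : ∀ z : ℝ, 0 < z → R * ((Real.exp z - 1)^2/(2*hmax^2)) ≤ Q z := by
    intro z hz
    rw [hQ z, if_neg (not_le.2 hz)]
    have hanti : ∀ t ∈ Set.uIcc (0:ℝ) z, HasDerivAt (fun s => (Real.exp s - 1)^2/2)
        (Real.exp t * (Real.exp t - 1)) t := by
      intro t _
      have h1 : HasDerivAt (fun s => Real.exp s - 1) (Real.exp t) t :=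
        (Real.hasDerivAt_exp t).sub_const 1
      have h2 := (h1.pow 2).div_const 2
      exact h2.congr_deriv (by norm_num; ring)
    have hIeq : ∫ s in (0:ℝ)..z, Real.exp s * (Real.exp s - 1)
        = (Real.exp z - 1)^2/2 := by
      rw [intervalIntegral.integral_eq_sub_of_hasDerivAt hanti
        ((Real.continuous_exp.mul (Real.continuous_exp.sub continuous_const)).intervalIntegrable _ _)]
      simp
    have hmono : ∫ s in (0:ℝ)..z, Real.exp s * (Real.exp s - 1) / hmax^2
        ≤ ∫ s in (0:ℝ)..z, (Real.exp s / (g s)^2) * (Real.exp s - 1) := by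
      apply intervalIntegral.integral_mono_on hz.le
        (((Real.continuous_exp.mul (Real.continuous_exp.sub continuous_const)).div_const _).intervalIntegrable _ _)
        (hf2cont.intervalIntegrable _ _)
      intro t ht
      have he1 : 1 ≤ Real.exp t := Real.one_le_exp (by linarith only [ht.1])
      have hgsq : (g t)^2 ≤ hmax^2 := by
        nlinarith only [hgle t, hgpos t, hmaxpos]
      have h' : Real.exp t / hmax^2 ≤ Real.exp t / g t^2 :=
        div_le_div_of_nonneg_left (Real.exp_pos t).le (pow_pos (hgpos t) 2) hgsq
      calc Real.exp t * (Real.exp t - 1) / hmax^2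
          = (Real.exp t / hmax^2) * (Real.exp t - 1) := by ring
        _ ≤ (Real.exp t / g t^2) * (Real.exp t - 1) :=
            mul_le_mul_of_nonneg_right h' (by linarith only [he1])
    rw [intervalIntegral.integral_div, hIeq] at hmono
    have := mul_le_mul_of_nonneg_left hmono hRpos.le
    calc R * ((Real.exp z - 1)^2/(2*hmax^2)) = R * ((Real.exp z - 1)^2/2/hmax^2) := by ring
      _ ≤ _ := this
  have hQnonneg : ∀ z, 0 ≤ Q z := by
    intro z
    rcases le_or_gt z 0 with hz | hz
    · have := hQle z hz
      nlinarith only [this, sq_nonneg z]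
    · refine le_trans ?_ (hQgeR z hz)
      positivity
  have hQpos : ∀ z, z ≠ 0 → 0 < Q z := by
    intro z hz0
    rcases le_or_gt z 0 with hz | hz
    · have h' := hQle z hz
      have hzlt : z < 0 := lt_of_le_of_ne hz hz0
      nlinarith only [h', hzlt]
    · refine lt_of_lt_of_le ?_ (hQgeR z hz)
      have h1 : 1 < Real.exp z := Real.one_lt_exp_iff.2 hz
      have h2 : 0 < (Real.exp z - 1)^2 := pow_pos (by linarith only [h1]) 2
      exact mul_pos hRpos (div_pos h2 (by nlinarith only [hmaxpos]))
  have hW1 : ∀ t : ℝ, 0 ≤ Real.exp t - t - 1 := fun t => by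
    linarith only [Real.add_one_le_exp t]
  have hW1' : ∀ t : ℝ, t ≠ 0 → 0 < Real.exp t - t - 1 := fun t ht => by
    linarith only [Real.add_one_lt_exp ht]
  have hBspos : 0 < B/(b+Dstar) := div_pos hBpos hs
  refine ⟨?_, ?_, ?_, ?_⟩
  · rw [hV]; simp [hQ0]
  · -- positive definiteness
    intro x hx
    rw [hV]
    have hxor : x.1 ≠ 0 ∨ x.2.1 ≠ 0 ∨ x.2.2 ≠ 0 := by
      by_contra hcon
      push_neg at hcon
      exact hx (by
        have : x = (x.1, x.2.1, x.2.2) := rfl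
        rw [this, hcon.1, hcon.2.1, hcon.2.2]
        rfl)
    have hq := hQnonneg x.2.2
    have hw2 := mul_nonneg hBspos.le (hW1 x.2.1)
    have hw1 := hW1 x.1
    rcases hxor with h1 | h2 | h3
    · linarith only [hW1' _ h1, hw2, hq]
    · have := mul_pos hBspos (hW1' _ h2)
      linarith only [this, hw1, hq]
    · linarith only [hQpos _ h3, hw1, hw2]
  · -- radial unboundedness
    rw [Filter.tendsto_atTop]
    intro N
    have hcoer1 : ∀ N' t : ℝ, |N'| + 4 ≤ |t| → N' ≤ Real.exp t - t - 1 := by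
      intro N' t ht
      rcases le_or_gt 0 t with h | h
      · rw [abs_of_nonneg h] at ht
        have h1 := Real.add_one_le_exp (t/2)
        have h2 : Real.exp (t/2) * Real.exp (t/2) = Real.exp t := by
          rw [← Real.exp_add]; ring_nf
        have h3 : 0 ≤ t/2 + 1 := by linarith only [ht, abs_nonneg N']
        nlinarith only [h1, h2, h3, ht, le_abs_self N', abs_nonneg N']
      · rw [abs_of_neg h] at ht
        linarith only [Real.exp_pos t, ht, le_abs_self N']
    obtain ⟨r, hrdef⟩ : ∃ r : ℝ, r = (|N|+4) + (|N*(b+Dstar)/B| + 4) + (|N|+2) +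
        (2*hmax^2*(|N|+1)/R + 1) := ⟨_, rfl⟩
    have hra : 0 ≤ 2*hmax^2*(|N|+1)/R :=
      div_nonneg (by positivity) hRpos.le
    have habsN : 0 ≤ |N| := abs_nonneg N
    have habsN' : 0 ≤ |N*(b+Dstar)/B| := abs_nonneg _
    have hr1 : |N| + 4 ≤ r := by rw [hrdef]; linarith only [habsN, habsN', hra]
    have hr2 : |N*(b+Dstar)/B| + 4 ≤ r := by rw [hrdef]; linarith only [habsN, habsN', hra]
    have hr3 : |N| + 2 ≤ r := by rw [hrdef]; linarith only [habsN, habsN', hra]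
    have hr4 : 2*hmax^2*(|N|+1)/R + 1 ≤ r := by
      rw [hrdef]; linarith only [habsN, habsN', hra]
    rw [Filter.eventually_iff, Filter.mem_cocompact]
    refine ⟨Metric.closedBall 0 r, isCompact_closedBall _ _, ?_⟩
    intro x hxmem
    simp only [Set.mem_compl_iff, Metric.mem_closedBall, dist_zero_right, not_le] at hxmem
    simp only [Set.mem_setOf_eq]
    rw [hV]
    have hq := hQnonneg x.2.2
    have hw2 := mul_nonneg hBspos.le (hW1 x.2.1)
    have hw1 := hW1 x.1
    have hn : ‖x‖ = max |x.1| (max |x.2.1| |x.2.2|) := by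
      rw [Prod.norm_def, Prod.norm_def, Real.norm_eq_abs, Real.norm_eq_abs, Real.norm_eq_abs]
    rw [hn] at hxmem
    rcases lt_max_iff.1 hxmem with hc1 | hc23
    · have := hcoer1 N x.1 (by linarith only [hr1, hc1])
      linarith only [this, hw2, hq]
    rcases lt_max_iff.1 hc23 with hc2 | hc3
    · -- x2 coordinate large
      have hN' := hcoer1 (N*(b+Dstar)/B) x.2.1 (by linarith only [hr2, hc2])
      have hmul := mul_le_mul_of_nonneg_left hN' hBspos.le
      have heq : B/(b+Dstar) * (N*(b+Dstar)/B) = N := by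
        field_simp [hBpos.ne', hs.ne']
      rw [heq] at hmul
      linarith only [hmul, hw1, hq]
    · -- x3 coordinate large
      rcases le_or_gt x.2.2 0 with h3 | h3
      · have habs : |x.2.2| = -x.2.2 := abs_of_nonpos h3
        have hz : |N| + 2 ≤ -x.2.2 := by linarith only [hc3, hr3, habs]
        have hQb := hQle x.2.2 h3
        have : N ≤ (1/2 : ℝ)*x.2.2^2 := by nlinarith only [hz, le_abs_self N, abs_nonneg N]
        linarith only [this, hQb, hw1, hw2]
      · have habs : |x.2.2| = x.2.2 := abs_of_pos h3
        have hz : 2*hmax^2*(|N|+1)/R + 1 ≤ x.2.2 := by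
          linarith only [hc3, hr4, habs]
        have hz1 : 1 ≤ x.2.2 := by linarith only [hz, hra]
        have hz2 : 2*hmax^2*(|N|+1)/R ≤ x.2.2 := by linarith only [hz]
        have h1 : 2*hmax^2*(|N|+1) ≤ R*x.2.2 := by
          rw [div_le_iff₀ hRpos] at hz2
          linarith only [hz2]
        have h3' : x.2.2^2 ≤ (Real.exp x.2.2 - 1)^2 := by
          nlinarith only [Real.add_one_le_exp x.2.2, hz1]
        have hQb := hQgeR x.2.2 h3
        have hNb : N ≤ R * ((Real.exp x.2.2 - 1)^2/(2*hmax^2)) := by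
          have hc2m : (0:ℝ) < 2*hmax^2 := by nlinarith only [hmaxpos]
          rw [show R * ((Real.exp x.2.2 - 1)^2/(2*hmax^2))
              = R * (Real.exp x.2.2 - 1)^2/(2*hmax^2) by ring, le_div_iff₀ hc2m]
          have hh1 : 0 ≤ x.2.2^2 - x.2.2 := by nlinarith only [hz1]
          nlinarith only [h1, h3', hz1, hRpos, le_abs_self N, hc2m,
            mul_nonneg hRpos.le hh1, mul_nonneg hRpos.le (by linarith only [h3'] : 0 ≤ (Real.exp x.2.2 - 1)^2 - x.2.2^2)]
        linarith only [hNb, hQb, hw1, hw2]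
  · -- derivative condition
    intro x hx
    have hmain : ∀ qd : ℝ, HasDerivAt Q qd x.2.2 →
        fderiv ℝ V x (F x) =
          (Real.exp x.1 - 1) * ((b+Dstar) * g x.2.2 * (Real.exp x.2.1 - 1) + b*(g x.2.2 - 1)
            + Dstar * g x.2.2 * (1 - Real.exp x.1))
        + (B/(b+Dstar)) * (Real.exp x.2.1 - 1) * ((b+Dstar) * (lam*(1 - g x.2.2)
            + lam*(Real.exp (-x.2.1) - 1) + g x.2.2*(1 - Real.exp x.2.1)))
        + qd * (p x.2.2 * (D x - Dstar * g x.2.2 * Real.exp x.1)) := by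
      intro qd hqd
      have h1 : HasDerivAt (fun t : ℝ => Real.exp t - t - 1) (Real.exp x.1 - 1) x.1 := by
        simpa using ((Real.hasDerivAt_exp x.1).sub (hasDerivAt_id x.1)).sub_const 1
      have h2 : HasDerivAt (fun t : ℝ => B/(b+Dstar) * (Real.exp t - t - 1))
          (B/(b+Dstar) * (Real.exp x.2.1 - 1)) x.2.1 := by
        simpa using (((Real.hasDerivAt_exp x.2.1).sub (hasDerivAt_id x.2.1)).sub_const 1).const_mul
          (B/(b+Dstar))
      have hp2 : HasFDerivAt (fun y : ℝ×ℝ×ℝ => y.2.1)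
          ((ContinuousLinearMap.fst ℝ ℝ ℝ).comp (ContinuousLinearMap.snd ℝ ℝ (ℝ×ℝ))) x :=
        hasFDerivAt_fst.comp x hasFDerivAt_snd
      have hp3 : HasFDerivAt (fun y : ℝ×ℝ×ℝ => y.2.2)
          ((ContinuousLinearMap.snd ℝ ℝ ℝ).comp (ContinuousLinearMap.snd ℝ ℝ (ℝ×ℝ))) x :=
        hasFDerivAt_snd.comp x hasFDerivAt_snd
      have hF1 : HasFDerivAt (fun y : ℝ×ℝ×ℝ => Real.exp y.1 - y.1 - 1)
          ((Real.exp x.1 - 1) • ContinuousLinearMap.fst ℝ ℝ (ℝ×ℝ)) x :=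
        h1.comp_hasFDerivAt x hasFDerivAt_fst
      have hF2 : HasFDerivAt (fun y : ℝ×ℝ×ℝ => B/(b+Dstar) * (Real.exp y.2.1 - y.2.1 - 1))
          ((B/(b+Dstar) * (Real.exp x.2.1 - 1)) •
            ((ContinuousLinearMap.fst ℝ ℝ ℝ).comp (ContinuousLinearMap.snd ℝ ℝ (ℝ×ℝ)))) x :=
        HasDerivAt.comp_hasFDerivAt (f := fun y : ℝ×ℝ×ℝ => y.2.1) x h2 hp2
      have hF3 : HasFDerivAt (fun y : ℝ×ℝ×ℝ => Q y.2.2)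
          (qd • ((ContinuousLinearMap.snd ℝ ℝ ℝ).comp (ContinuousLinearMap.snd ℝ ℝ (ℝ×ℝ)))) x :=
        hqd.comp_hasFDerivAt x hp3
      have hVd : HasFDerivAt V
          ((Real.exp x.1 - 1) • ContinuousLinearMap.fst ℝ ℝ (ℝ×ℝ)
            + (B/(b+Dstar) * (Real.exp x.2.1 - 1)) •
                ((ContinuousLinearMap.fst ℝ ℝ ℝ).comp (ContinuousLinearMap.snd ℝ ℝ (ℝ×ℝ)))
            + qd • ((ContinuousLinearMap.snd ℝ ℝ ℝ).comp (ContinuousLinearMap.snd ℝ ℝ (ℝ×ℝ)))) x := by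
        rw [show V = fun y : ℝ×ℝ×ℝ => Real.exp y.1 - y.1 - 1
            + B/(b+Dstar) * (Real.exp y.2.1 - y.2.1 - 1) + Q y.2.2 from funext hV]
        exact (hF1.add hF2).add hF3
      rw [hVd.fderiv, hF x]
      simp only [ContinuousLinearMap.add_apply, ContinuousLinearMap.coe_smul',
        Pi.smul_apply, ContinuousLinearMap.coe_comp', Function.comp_apply,
        ContinuousLinearMap.coe_fst', ContinuousLinearMap.coe_snd', smul_eq_mul]
    have key : ∀ Z : ℝ, B/(b+Dstar) * (Real.exp x.2.1 - 1) * ((b+Dstar) * Z)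
        = B * ((Real.exp x.2.1 - 1) * Z) := by
      intro Z; field_simp
    have hvyeq : (Real.exp x.2.1 - 1) * (Real.exp (-x.2.1) - 1)
        = -((Real.exp x.2.1 - 1)^2 * Real.exp (-x.2.1)) := by
      rw [Real.exp_neg]
      field_simp
      ring
    have hvy2 : B*lam*((Real.exp x.2.1 - 1) * (Real.exp (-x.2.1) - 1)) ≤ 0 := by
      have h0 : 0 ≤ (Real.exp x.2.1 - 1)^2 * Real.exp (-x.2.1) := by positivity
      nlinarith only [hvyeq, h0, mul_nonneg hBpos.le hlam0]
    rcases lt_trichotomy x.2.2 0 with h3 | h3 | h3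
    · -- x₃ < 0
      have hqd := hQd_neg x.2.2 h3
      rw [hmain _ hqd, key, hD x, if_pos h3.le]
      obtain ⟨h, hhdef⟩ : ∃ y : ℝ, y = g x.2.2 := ⟨_, rfl⟩
      rw [← hhdef]
      have hhpos : 0 < h := by rw [hhdef]; exact hgpos _
      have hple : 0 < p x.2.2 := hppos _
      obtain ⟨t1, ht1def⟩ : ∃ y : ℝ, y = |h - 1| ^ (1 - α) := ⟨_, rfl⟩
      obtain ⟨t2, ht2def⟩ : ∃ y : ℝ, y = |h - 1| ^ (1 + α) := ⟨_, rfl⟩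
      rw [← ht1def, ← ht2def]
      have ht1n : 0 ≤ t1 := by rw [ht1def]; exact Real.rpow_nonneg (abs_nonneg _) _
      have ht2n : 0 ≤ t2 := by rw [ht2def]; exact Real.rpow_nonneg (abs_nonneg _) _
      have ht12 : t1 * t2 = (h-1)^2 := by
        rw [ht1def, ht2def]
        rcases eq_or_ne (h-1) 0 with h0 | h0
        · rw [h0]
          rw [abs_zero, Real.zero_rpow (by linarith only [hα1] : (1:ℝ) - α ≠ 0),
            Real.zero_rpow (by linarith only [hα0] : (1:ℝ) + α ≠ 0)]
          norm_num
        · rw [← Real.rpow_add (abs_pos.2 h0), show (1:ℝ) - α + (1+α) = ((2:ℕ):ℝ) by push_cast; ring,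
            Real.rpow_natCast, sq_abs]
      have hq1 : 0 < Real.exp (-x.2.2) - 1 := by
        have := (Real.one_lt_exp_iff).2 (by linarith only [h3] : 0 < -x.2.2)
        linarith only [this]
      -- simplify the F3 factor
      have hF3eq : p x.2.2 * ((κ + 1) * Dstar * h * Real.exp (x.1 - x.2.2) / p x.2.2
            + δ * t2 - Dstar * h * Real.exp x.1)
          = Dstar*h*Real.exp x.1*(Real.exp (-x.2.2) - 1) + p x.2.2 * δ * t2 := by
        have hpe : p x.2.2 = κ * Real.exp (-x.2.2) + 1 := hp _
        have hex : Real.exp (x.1 - x.2.2) = Real.exp x.1 * Real.exp (-x.2.2) := by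
          rw [← Real.exp_add]; ring_nf
        field_simp
        rw [hpe, hex]
        ring
      rw [hF3eq]
      -- bound the core quadratic part
      have h2dh : (0:ℝ) < 2*Dstar*h := by
        have := mul_pos hDstar hhpos
        linarith only [this]
      have hkey : 2*Dstar*h*((Real.exp x.1 - 1)*((b+Dstar)*h*(Real.exp x.2.1 - 1)
            + b*(h-1) + Dstar*h*(1 - Real.exp x.1))
            - B*lam*((h-1)*(Real.exp x.2.1 - 1)) - B*h*(Real.exp x.2.1 - 1)^2)
          ≤ Ω*(h-1)^2 := by
        nlinarith only [sq_nonneg (Dstar*h*(Real.exp x.1 - 1) - b*(h-1)),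
          mul_nonneg (mul_nonneg hDstar.le hBpos.le)
            (sq_nonneg (h*(Real.exp x.2.1 - 1) + lam*(h-1))),
          sq_nonneg (Dstar*h*(Real.exp x.1 - 1) - (b+Dstar)*h*(Real.exp x.2.1 - 1)),
          mul_nonneg (sub_nonneg.2 hdBge) (sq_nonneg (h*(Real.exp x.2.1 - 1))),
          mul_nonneg (sub_nonneg.2 hΩcoef) (sq_nonneg (h-1))]
      have hP5 : (Real.exp x.1 - 1) * ((b+Dstar)*h*(Real.exp x.2.1 - 1) + b*(h-1)
            + Dstar*h*(1 - Real.exp x.1))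
          + B * ((Real.exp x.2.1 - 1) * (lam*(1-h) + lam*(Real.exp (-x.2.1) - 1)
            + h*(1 - Real.exp x.2.1)))
          ≤ Ω*(h-1)^2/(2*Dstar*h) := by
        have hdiv : (Real.exp x.1 - 1)*((b+Dstar)*h*(Real.exp x.2.1 - 1)
              + b*(h-1) + Dstar*h*(1 - Real.exp x.1))
              - B*lam*((h-1)*(Real.exp x.2.1 - 1)) - B*h*(Real.exp x.2.1 - 1)^2
            ≤ Ω*(h-1)^2/(2*Dstar*h) := by
          rw [le_div_iff₀ h2dh]
          linarith only [hkey]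
        nlinarith only [hdiv, hvy2]
      -- the remaining terms
      have hq2 : x.2.2 * (Dstar*h*Real.exp x.1*(Real.exp (-x.2.2) - 1)) < 0 :=
        mul_neg_of_neg_of_pos h3
          (mul_pos (mul_pos (mul_pos hDstar hhpos) (Real.exp_pos x.1)) hq1)
      have hq3 : x.2.2 * (p x.2.2 * δ * t2) ≤ 0 := by
        have h0 : 0 ≤ p x.2.2 * δ * t2 := by
          have := mul_nonneg (mul_nonneg hple.le hδ.le) ht2n
          linarith only [this]
        exact mul_nonpos_of_nonpos_of_nonneg h3.le h0
      have hq4 : 0 ≤ (Ω/(2*Dstar*δ))*(t1/(p x.2.2*h))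
          * (Dstar*h*Real.exp x.1*(Real.exp (-x.2.2) - 1)) := by
        apply mul_nonneg (mul_nonneg hc00 (div_nonneg ht1n (mul_pos hple hhpos).le))
        exact (mul_pos (mul_pos (mul_pos hDstar hhpos) (Real.exp_pos x.1)) hq1).le
      have hq5 : (Ω/(2*Dstar*δ))*(t1/(p x.2.2*h))*(p x.2.2*δ*t2)
          = Ω*(h-1)^2/(2*Dstar*h) := by
        rw [show (Ω/(2*Dstar*δ))*(t1/(p x.2.2*h))*(p x.2.2*δ*t2)
            = Ω*(t1*t2)/(2*Dstar*h) * (p x.2.2/p x.2.2) * (δ/δ) from by ring,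
          div_self hple.ne', div_self hδ.ne', ht12]
        ring
      have hexpand : (x.2.2 - Ω/(2*Dstar*δ)*(t1/(p x.2.2*h)))
            * (Dstar*h*Real.exp x.1*(Real.exp (-x.2.2) - 1) + p x.2.2*δ*t2)
          = x.2.2 * (Dstar*h*Real.exp x.1*(Real.exp (-x.2.2) - 1))
            + x.2.2 * (p x.2.2 * δ * t2)
            - (Ω/(2*Dstar*δ))*(t1/(p x.2.2*h)) * (Dstar*h*Real.exp x.1*(Real.exp (-x.2.2) - 1))
            - (Ω/(2*Dstar*δ))*(t1/(p x.2.2*h))*(p x.2.2*δ*t2) := by ring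
      nlinarith only [hP5, hq2, hq3, hq4, hq5, hexpand]
    · -- x₃ = 0
      have hqd0 : HasDerivAt Q 0 x.2.2 := by rw [h3]; exact hQd_zero
      rw [hmain 0 hqd0, key, h3, hg0]
      have hxor : x.1 ≠ 0 ∨ x.2.1 ≠ 0 := by
        by_contra hcon
        push_neg at hcon
        exact hx (by
          have hxx : x = (x.1, x.2.1, x.2.2) := rfl
          rw [hxx, hcon.1, hcon.2, h3]
          rfl)
      rcases eq_or_ne x.2.1 0 with h2 | h2
      · have h1 : x.1 ≠ 0 := by
          rcases hxor with h | h
          · exact h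
          · exact absurd h2 h
        have hu : Real.exp x.1 - 1 ≠ 0 := by
          intro hh
          exact h1 (by
            have : Real.exp x.1 = 1 := by linarith only [hh]
            exact (Real.exp_eq_one_iff _).1 this)
        have hu2 : 0 < (Real.exp x.1 - 1)^2 :=
          lt_of_le_of_ne (sq_nonneg _) (Ne.symm (pow_ne_zero 2 hu))
        rw [h2]
        simp only [Real.exp_zero, mul_zero, zero_mul, add_zero, neg_zero, sub_self]
        nlinarith only [mul_pos hDstar hu2]
      · have hv : Real.exp x.2.1 - 1 ≠ 0 := by
          intro hh
          exact h2 (by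
            have : Real.exp x.2.1 = 1 := by linarith only [hh]
            exact (Real.exp_eq_one_iff _).1 this)
        have hv2 : 0 < (Real.exp x.2.1 - 1)^2 :=
          lt_of_le_of_ne (sq_nonneg _) (Ne.symm (pow_ne_zero 2 hv))
        have hslt : (b+Dstar)^2 < 4*(Dstar*B) := by nlinarith only [hdBge, sq_nonneg (b+Dstar), hs]
        nlinarith only [sq_nonneg (2*Dstar*(Real.exp x.1 - 1) - (b+Dstar)*(Real.exp x.2.1 - 1)),
          mul_pos (by nlinarith only [hslt, hs] : (0:ℝ) < 4*(Dstar*B) - (b+Dstar)^2) hv2,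
          hvy2, hDstar, sq_nonneg (Real.exp x.1 - 1)]
    · -- x₃ > 0
      have hqd := hQd_pos x.2.2 h3
      rw [hmain _ hqd, key, hD x, if_neg (not_le.2 h3), add_zero]
      -- assumption (C) at S₃
      have hpe2 : p x.2.2 ≤ κ + 1 := by
        rw [hp]
        have h' : Real.exp (-x.2.2) ≤ 1 := Real.exp_le_one_iff.2 (by linarith only [h3])
        nlinarith only [h', hκpos]
      have hSmem : S_in / p x.2.2 ∈ Set.Icc Sstar S_in := by
        constructor
        · rw [← hSstar_eq]
          exact div_le_div_of_nonneg_left hSin.le (hppos _) hpe2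
        · exact div_le_self hSin.le (hpgt1 _).le
      have hCS := hC _ hSmem
      have hμS3 : 0 < μ (S_in / p x.2.2) := hμ_pos _ (hSf_pos _)
      obtain ⟨ψ, hψdef⟩ : ∃ y : ℝ, y = μ Sstar / μ (S_in / p x.2.2) - 1 := ⟨_, rfl⟩
      rw [← hψdef] at hCS
      have hCineq : β*ψ + Cc*ψ^2 < A := by
        have hCeq : Cc = (1+lam)*(lam^2*φ*(b+Dstar)^2/(4*Dstar)) := by
          rw [hCcdef, hB]; field_simp
        have hAeq2 : A = Dstar*(1 - 1/(4*(1+lam)*φ)) := by rw [hAdef, hΦdef]; ring_nf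
        rw [hβdef, hCeq, hAeq2]
        exact hCS
      obtain ⟨h, hhdef⟩ : ∃ y : ℝ, y = g x.2.2 := ⟨_, rfl⟩
      rw [← hhdef]
      have hhpos : 0 < h := by rw [hhdef]; exact hgpos _
      have hhle : h ≤ hmax := by rw [hhdef]; exact hgle _
      have hθψ : h - 1 = -(h*ψ) := by
        have h1 : h*(1+ψ) = 1 := by
          rw [hhdef, hψdef, hg]
          field_simp
          ring
        linear_combination h1
      have hex1 : 1 < Real.exp x.2.2 := Real.one_lt_exp_iff.2 h3
      have hee : Real.exp x.2.2 * Real.exp (-x.2.2) = 1 := by rw [← Real.exp_add]; simp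
      have hone_sub : 1 - Real.exp (-x.2.2) ≤ Real.exp x.2.2 - 1 := by
        nlinarith only [hee, mul_nonneg (sq_nonneg (Real.exp x.2.2 - 1)) (Real.exp_pos (-x.2.2)).le,
          Real.exp_pos x.2.2, Real.exp_pos (-x.2.2)]
      have hSub : S_in/p x.2.2 - Sstar ≤ S_in*κ*(Real.exp x.2.2 - 1) := by
        have hpe3 : p x.2.2 = κ * Real.exp (-x.2.2) + 1 := hp _
        rw [← hSstar_eq, div_sub_div _ _ (hppos x.2.2).ne'
          (by linarith only [hκpos] : κ + 1 ≠ 0)]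
        have hnum : S_in*(κ+1) - p x.2.2*S_in = S_in*κ*(1 - Real.exp (-x.2.2)) := by
          rw [hpe3]; ring
        rw [hnum]
        have hden : 1 ≤ p x.2.2*(κ+1) := by nlinarith only [hpgt1 x.2.2, hκpos]
        have hexle : Real.exp (-x.2.2) ≤ 1 := Real.exp_le_one_iff.2 (by linarith only [h3])
        have hnn : 0 ≤ S_in*κ*(1 - Real.exp (-x.2.2)) :=
          mul_nonneg (mul_nonneg hSin.le hκpos.le) (by linarith only [hexle])
        calc S_in*κ*(1 - Real.exp (-x.2.2)) / (p x.2.2*(κ+1))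
            ≤ S_in*κ*(1 - Real.exp (-x.2.2)) := div_le_self hnn hden
          _ ≤ S_in*κ*(Real.exp x.2.2 - 1) := by
              nlinarith only [hone_sub, mul_nonneg hSin.le hκpos.le]
      have hψabs : |ψ| ≤ K*(Real.exp x.2.2 - 1) := by
        have h1 := hlipR _ hSmem
        have hψform : ψ = (μ Sstar - μ (S_in/p x.2.2))/μ (S_in/p x.2.2) := by
          rw [hψdef]; field_simp
        rw [hψform, abs_div, abs_of_pos hμS3]
        have h2 : |μ Sstar - μ (S_in/p x.2.2)| / μ (S_in/p x.2.2)
            ≤ (L*(S_in/p x.2.2 - Sstar))/m :=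
          div_le_div₀ (mul_nonneg hL0 (by linarith only [hSmem.1] :
            (0:ℝ) ≤ S_in/p x.2.2 - Sstar)) h1 hmpos (hmle _ hSmem)
        refine le_trans h2 ?_
        have h4 : L*(S_in/p x.2.2 - Sstar) ≤ L*(S_in*κ*(Real.exp x.2.2 - 1)) :=
          mul_le_mul_of_nonneg_left hSub hL0
        have h5 : L*(S_in*κ*(Real.exp x.2.2 - 1))/m = (L*S_in*κ/m)*(Real.exp x.2.2 - 1) := by
          field_simp
        have hKK : L*S_in*κ/m ≤ K := by rw [hKdef]; linarith only []
        calc L*(S_in/p x.2.2 - Sstar)/m ≤ L*(S_in*κ*(Real.exp x.2.2 - 1))/m := by gcongr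
          _ = (L*S_in*κ/m)*(Real.exp x.2.2 - 1) := h5
          _ ≤ K*(Real.exp x.2.2 - 1) :=
              mul_le_mul_of_nonneg_right hKK (by linarith only [hex1])
      have hψsq : ψ^2 ≤ K^2*(Real.exp x.2.2 - 1)^2 := by
        nlinarith only [hψabs, abs_nonneg ψ, sq_abs ψ]
      have hEpos : 0 < (Real.exp x.2.2 - 1)^2 := pow_pos (by linarith only [hex1]) 2
      have hF3eq : p x.2.2 * ((κ + 1) * Dstar * h * Real.exp (x.1 - x.2.2) / p x.2.2
            - Dstar * h * Real.exp x.1)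
          = Dstar*h*Real.exp x.1*(Real.exp (-x.2.2) - 1) := by
        have hpe : p x.2.2 = κ * Real.exp (-x.2.2) + 1 := hp _
        have hex : Real.exp (x.1 - x.2.2) = Real.exp x.1 * Real.exp (-x.2.2) := by
          rw [← Real.exp_add]; ring_nf
        rw [mul_sub, mul_div_cancel₀ _ (hppos x.2.2).ne', hpe, hex]
        ring
      rw [hF3eq]
      have hQF3 : R * (Real.exp x.2.2 / h^2 * (Real.exp x.2.2 - 1))
            * (Dstar*h*Real.exp x.1*(Real.exp (-x.2.2) - 1))
          = -(R*Dstar*Real.exp x.1*(Real.exp x.2.2 - 1)^2/h) := by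
        have h2 : Real.exp x.2.2 * (Real.exp x.2.2 - 1) * (Real.exp (-x.2.2) - 1)
            = -(Real.exp x.2.2 - 1)^2 := by
          linear_combination (Real.exp x.2.2 - 1) * hee
        have hhh : Real.exp x.2.2/h^2*h = Real.exp x.2.2/h := by
          rw [pow_two, ← div_div, div_mul_cancel₀ _ hhpos.ne']
        calc R * (Real.exp x.2.2 / h^2 * (Real.exp x.2.2 - 1))
              * (Dstar*h*Real.exp x.1*(Real.exp (-x.2.2) - 1))
            = R*Dstar*Real.exp x.1*(Real.exp x.2.2/h^2*h)
              *((Real.exp x.2.2 - 1)*(Real.exp (-x.2.2) - 1)) := by ring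
          _ = R*Dstar*Real.exp x.1*(Real.exp x.2.2/h)
              *((Real.exp x.2.2 - 1)*(Real.exp (-x.2.2) - 1)) := by rw [hhh]
          _ = R*Dstar*Real.exp x.1
              *(Real.exp x.2.2*(Real.exp x.2.2 - 1)*(Real.exp (-x.2.2) - 1))*(1/h) := by ring
          _ = R*Dstar*Real.exp x.1*(-(Real.exp x.2.2 - 1)^2)*(1/h) := by rw [h2]
          _ = -(R*Dstar*Real.exp x.1*(Real.exp x.2.2 - 1)^2/h) := by ring
      rw [hQF3]
      -- pointwise inequality
      have hu : -1 < Real.exp x.1 - 1 := by linarith only [Real.exp_pos x.1]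
      have hceq : A*(R*Dstar/(2*K^2*hmax^2)) = 10*A*Cc + 4*β^2 + A := by
        rw [hRdef]
        field_simp
        ring
      have hbr := stmt18_bracket hApos hCc0 hu hCineq (le_of_eq hceq.symm)
      have hρpos : 0 < R*Dstar/hmax^2 := div_pos (mul_pos hRpos hDstar) (pow_pos hmaxpos 2)
      have hG1 : (b+Dstar)*(Real.exp x.1 - 1)*(Real.exp x.2.1 - 1) - b*ψ*(Real.exp x.1 - 1)
          - Dstar*(Real.exp x.1 - 1)^2 + B*lam*ψ*(Real.exp x.2.1 - 1)
          - B*(Real.exp x.2.1 - 1)^2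
          - (R*Dstar/hmax^2)*(Real.exp x.1*(Real.exp x.2.2 - 1)^2) < 0 := by
        have hdBΦ : Dstar/(4*Φ)*(4*B) = (b+Dstar)^2 := by
          rw [div_mul_eq_mul_div, div_eq_iff (mul_pos four_pos hΦpos).ne']
          linear_combination 4*hdBeq
        have hCc4 : 4*B*(Cc*ψ^2) = B^2*lam^2*ψ^2 := by rw [hCcdef]; ring
        have hdBΦu : Dstar/(4*Φ)*(4*B)*(Real.exp x.1 - 1)^2
            = (b+Dstar)^2*(Real.exp x.1 - 1)^2 := by rw [hdBΦ]
        have hsq4 : 4*B*((b+Dstar)*(Real.exp x.1 - 1)*(Real.exp x.2.1 - 1)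
              + B*lam*ψ*(Real.exp x.2.1 - 1) - B*(Real.exp x.2.1 - 1)^2)
            ≤ 4*B*(Dstar/(4*Φ)*(Real.exp x.1 - 1)^2
              + ((b+Dstar)*lam/2)*(Real.exp x.1 - 1)*ψ + Cc*ψ^2) := by
          nlinarith only [sq_nonneg ((b+Dstar)*(Real.exp x.1 - 1) + B*lam*ψ
            - 2*B*(Real.exp x.2.1 - 1)), hdBΦu, hCc4]
        have hsq : (b+Dstar)*(Real.exp x.1 - 1)*(Real.exp x.2.1 - 1)
              + B*lam*ψ*(Real.exp x.2.1 - 1) - B*(Real.exp x.2.1 - 1)^2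
            ≤ Dstar/(4*Φ)*(Real.exp x.1 - 1)^2
              + ((b+Dstar)*lam/2)*(Real.exp x.1 - 1)*ψ + Cc*ψ^2 :=
          le_of_mul_le_mul_left hsq4 (by linarith only [hBpos])
        have hβu : β*(Real.exp x.1 - 1)*ψ = b*(Real.exp x.1 - 1)*ψ
            - lam*(b+Dstar)/2*(Real.exp x.1 - 1)*ψ := by rw [hβdef]; ring
        have hAequ : Dstar/(4*Φ)*(Real.exp x.1 - 1)^2
            = Dstar*(Real.exp x.1 - 1)^2 - A*(Real.exp x.1 - 1)^2 := by
          rw [hAdef]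
          field_simp
          ring
        have hE2 : (R*Dstar/(2*K^2*hmax^2))*(1+(Real.exp x.1 - 1))*ψ^2
            ≤ (R*Dstar/hmax^2)/2*Real.exp x.1*(Real.exp x.2.2 - 1)^2 := by
          have hK2 : (0:ℝ) < K^2 := pow_pos hKpos 2
          have e1 : (R*Dstar/(2*K^2*hmax^2))*ψ^2 = (R*Dstar/hmax^2)/2*(ψ^2/K^2) := by
            ring
          have e2 : ψ^2/K^2 ≤ (Real.exp x.2.2 - 1)^2 := by
            rw [div_le_iff₀ hK2]
            nlinarith only [hψsq]
          have e3 : (R*Dstar/hmax^2)/2*(ψ^2/K^2) ≤ (R*Dstar/hmax^2)/2*(Real.exp x.2.2 - 1)^2 :=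
            mul_le_mul_of_nonneg_left e2 (by linarith only [hρpos])
          have e4 : 1 + (Real.exp x.1 - 1) = Real.exp x.1 := by ring
          calc (R*Dstar/(2*K^2*hmax^2))*(1+(Real.exp x.1 - 1))*ψ^2
              = ((R*Dstar/(2*K^2*hmax^2))*ψ^2) * Real.exp x.1 := by rw [e4]; ring
            _ ≤ ((R*Dstar/hmax^2)/2*(Real.exp x.2.2 - 1)^2) * Real.exp x.1 := by
                apply mul_le_mul_of_nonneg_right _ (Real.exp_pos x.1).le
                rw [e1]
                exact e3
            _ = (R*Dstar/hmax^2)/2*Real.exp x.1*(Real.exp x.2.2 - 1)^2 := by ring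
        nlinarith only [hsq, hβu, hAequ, hbr, hE2,
          mul_pos (mul_pos hρpos (Real.exp_pos x.1)) hEpos]
      have hcoreeq : (Real.exp x.1 - 1) * ((b+Dstar)*h*(Real.exp x.2.1 - 1) + b*(h-1)
            + Dstar*h*(1 - Real.exp x.1))
          + B * ((Real.exp x.2.1 - 1) * (lam*(1-h) + lam*(Real.exp (-x.2.1) - 1)
            + h*(1 - Real.exp x.2.1)))
          = h*((b+Dstar)*(Real.exp x.1 - 1)*(Real.exp x.2.1 - 1) - b*ψ*(Real.exp x.1 - 1)
            - Dstar*(Real.exp x.1 - 1)^2 + B*lam*ψ*(Real.exp x.2.1 - 1)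
            - B*(Real.exp x.2.1 - 1)^2)
            + B*lam*((Real.exp x.2.1 - 1)*(Real.exp (-x.2.1) - 1)) := by
        linear_combination (b*(Real.exp x.1 - 1) - B*lam*(Real.exp x.2.1 - 1)) * hθψ
      have hρ2 : (R*Dstar/hmax^2)*h*(Real.exp x.1*(Real.exp x.2.2 - 1)^2)
          ≤ R*Dstar*Real.exp x.1*(Real.exp x.2.2 - 1)^2/h := by
        rw [le_div_iff₀ hhpos]
        have hh2 : h^2 ≤ hmax^2 := by nlinarith only [hhle, hhpos]
        have hEE : 0 ≤ Real.exp x.1*(Real.exp x.2.2 - 1)^2 :=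
          mul_nonneg (Real.exp_pos x.1).le hEpos.le
        have hch : (R*Dstar/hmax^2)*h^2 ≤ R*Dstar := by
          rw [div_mul_eq_mul_div, div_le_iff₀ (pow_pos hmaxpos 2)]
          exact mul_le_mul_of_nonneg_left hh2 (mul_nonneg hRpos.le hDstar.le)
        calc (R*Dstar/hmax^2)*h*(Real.exp x.1*(Real.exp x.2.2 - 1)^2)*h
            = ((R*Dstar/hmax^2)*h^2)*(Real.exp x.1*(Real.exp x.2.2 - 1)^2) := by ring
          _ ≤ (R*Dstar)*(Real.exp x.1*(Real.exp x.2.2 - 1)^2) :=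
              mul_le_mul_of_nonneg_right hch hEE
          _ = R*Dstar*Real.exp x.1*(Real.exp x.2.2 - 1)^2 := by ring
      have hfinal := mul_neg_of_pos_of_neg hhpos hG1
      nlinarith only [hcoreeq, hvy2, hρ2, hfinal]
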